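/- Let L ≥ 1 be an integer and suppose 𝒫_ℓ ≠ 0 for all 1 ≤ ℓ ≤ L. With f_0, f_1, …, f_L as above, define power series g_0, g_1, …, g_L ∈ K⟦T⟧ by g_0 = X² − f_0 and, for 1 ≤ ℓ ≤ L, g_ℓ = (𝒫_{ℓ+1}·g_{ℓ−1}·f_0 − ℛ_ℓ·f_ℓ) / (𝒫_ℓ·β). Then for every ℓ with 0 ≤ ℓ ≤ L one has g_ℓ ≡ ℛ_{ℓ+1}·T^{3ℓ+3} + 𝒫_{ℓ+1}·T^{3ℓ+4} (mod T^q). -/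

import Mathlib

open PowerSeries

set_option maxHeartbeats 1600000

/-- Proposition 2.13 (`prop:functions:gell`, power-series form): the recursively
defined series `g_ℓ` satisfy `g_ℓ ≡ ℛ_{ℓ+1} T^{3ℓ+3} + 𝒫_{ℓ+1} T^{3ℓ+4} (mod T^q)`
for `0 ≤ ℓ ≤ L`. -/
theorem stmt_15 {K : Type*} [Field K] [CharP K 3]
    (t : ℕ) (ht : 1 ≤ t) (q : ℕ) (hq : q = 3 ^ t)
    (β : K) (hβ0 : β ≠ 0) (hβ1 : β ≠ 1)
    (P Q R : ℕ → K)
    (hP0 : P 0 = 0) (hP1 : P 1 = 1)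
    (hQ0 : Q 0 = (β * (β - 1))⁻¹) (hQ1 : Q 1 = β)
    (hR0 : R 0 = -(β ^ 2)⁻¹) (hR1 : R 1 = -(β + 1))
    (hPrec : ∀ j : ℕ, 1 ≤ j → P (j + 1) = -β ^ 3 * P j - (β * (β - 1)) ^ 3 * P (j - 1))
    (hQrec : ∀ j : ℕ, 1 ≤ j → Q (j + 1) = -β ^ 3 * Q j - (β * (β - 1)) ^ 3 * Q (j - 1))
    (hRrec : ∀ j : ℕ, 1 ≤ j → R (j + 1) = -β ^ 3 * R j - (β * (β - 1)) ^ 3 * R (j - 1))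
    (L : ℕ) (hL : 1 ≤ L)
    (hPne : ∀ ℓ : ℕ, 1 ≤ ℓ → ℓ ≤ L → P ℓ ≠ 0)
    (X Y : PowerSeries K)
    (hX : ∀ k : ℕ, k < q → coeff k X =
      coeff k (PowerSeries.X + PowerSeries.X ^ 2))
    (hY : ∀ k : ℕ, k < q → coeff k Y =
      coeff k (PowerSeries.X - C β * PowerSeries.X ^ 3))
    (f : ℕ → PowerSeries K)
    (hf0 : f 0 = X - Y)
    (hf1 : f 1 = f 0 - X ^ 2 - C (β + 1) * X * f 0 + C (β ^ 2 - β - 1) * f 0 ^ 2)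
    (hf2 : f 2 = C (β ^ 2 - β) * (f 0 * f 1) + C (β ^ 3) * (f 0 ^ 2 * X)
      + f 1 + C (β ^ 2) * f 0 ^ 3)
    (hfj : ∀ j : ℕ, 3 ≤ j → j ≤ L →
      f j = (-C (β ^ 3 * P (j - 1)) * (f 0 * f (j - 1)) - C (P j) * (f 1 * f (j - 2)))
        * (C (β ^ 2 * (β - 1) ^ 2 * P (j - 2)))⁻¹)
    (g : ℕ → PowerSeries K)
    (hg0 : g 0 = X ^ 2 - f 0)
    (hgl : ∀ ℓ : ℕ, 1 ≤ ℓ → ℓ ≤ L →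
      g ℓ = (C (P (ℓ + 1)) * (g (ℓ - 1) * f 0) - C (R ℓ) * f ℓ)
        * (C (P ℓ * β))⁻¹) :
    ∀ ℓ : ℕ, ℓ ≤ L → ∀ k : ℕ, k < q →
      coeff k (g ℓ) =
        coeff k (C (R (ℓ + 1)) * PowerSeries.X ^ (3 * ℓ + 3)
          + C (P (ℓ + 1)) * PowerSeries.X ^ (3 * ℓ + 4)) := by
  have h3 : (3 : K) = 0 := by exact_mod_cast CharP.cast_eq_zero K 3
  have hβ1' : β - 1 ≠ 0 := sub_ne_zero.mpr hβ1
  have hbb : β * (β - 1) ≠ 0 := mul_ne_zero hβ0 hβ1'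
  have hinv : (β * (β - 1)) * (β * (β - 1))⁻¹ = 1 := mul_inv_cancel₀ hbb
  have hb2 : (β ^ 2) * (β ^ 2)⁻¹ = 1 := mul_inv_cancel₀ (pow_ne_zero 2 hβ0)
  -- scalar values
  have hP2 : P 2 = -β ^ 3 := by
    have h : P 2 = -β ^ 3 * P 1 - (β * (β - 1)) ^ 3 * P 0 := hPrec 1 le_rfl
    rw [hP0, hP1] at h
    linear_combination h
  have hQ2 : Q 2 = β ^ 4 - β ^ 3 - β ^ 2 := by
    have h : Q 2 = -β ^ 3 * Q 1 - (β * (β - 1)) ^ 3 * Q 0 := hQrec 1 le_rfl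
    rw [hQ0, hQ1] at h
    linear_combination h - (β * (β - 1)) ^ 2 * hinv + (β ^ 3 - β ^ 4) * h3
  have hP3 : P 3 = β ^ 3 := by
    have h : P 3 = -β ^ 3 * P 2 - (β * (β - 1)) ^ 3 * P 1 := hPrec 2 (by omega)
    rw [hP1, hP2] at h
    linear_combination h + (β ^ 5 - β ^ 4) * h3
  have hQ3 : Q 3 = β ^ 7 + β ^ 6 + β ^ 5 + β ^ 4 := by
    have h : Q 3 = -β ^ 3 * Q 2 - (β * (β - 1)) ^ 3 * Q 1 := hQrec 2 (by omega)
    rw [hQ1, hQ2] at h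
    linear_combination h + (-β ^ 7 + β ^ 6 - β ^ 5) * h3
  have hR2 : R 2 = (β + 1) * β ^ 3 + β * (β - 1) ^ 3 := by
    have h : R 2 = -β ^ 3 * R 1 - (β * (β - 1)) ^ 3 * R 0 := hRrec 1 le_rfl
    rw [hR0, hR1] at h
    linear_combination h + β * (β - 1) ^ 3 * hb2
  -- Q and R in terms of P
  have hQP : ∀ j : ℕ, Q (j + 1) = β * P (j + 1) - β ^ 2 * (β - 1) ^ 2 * P j := by
    intro j
    induction j using Nat.twoStepInduction with
    | zero => rw [hQ1, hP1, hP0]; ring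
    | one => rw [hQ2, hP2, hP1]; linear_combination (β ^ 4 - β ^ 3) * h3
    | more n ih1 ih2 =>
      have ih1' : Q (n + 1) = β * P (n + 1) - β ^ 2 * (β - 1) ^ 2 * P n := ih1
      have ih2' : Q (n + 2) = β * P (n + 2) - β ^ 2 * (β - 1) ^ 2 * P (n + 1) := ih2
      have hqr : Q (n + 3) = -β ^ 3 * Q (n + 2) - (β * (β - 1)) ^ 3 * Q (n + 1) :=
        hQrec (n + 2) (by omega)
      have hp1 : P (n + 2) = -β ^ 3 * P (n + 1) - (β * (β - 1)) ^ 3 * P n :=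
        hPrec (n + 1) (by omega)
      have hp2 : P (n + 3) = -β ^ 3 * P (n + 2) - (β * (β - 1)) ^ 3 * P (n + 1) :=
        hPrec (n + 2) (by omega)
      show Q (n + 3) = β * P (n + 3) - β ^ 2 * (β - 1) ^ 2 * P (n + 2)
      linear_combination hqr - β ^ 3 * ih2' - β ^ 3 * (β - 1) ^ 3 * ih1'
        - β * hp2 + β ^ 2 * (β - 1) ^ 2 * hp1
  have hRP : ∀ j : ℕ, R (j + 1) = -(β + 1) * P (j + 1) + β * (β - 1) ^ 3 * P j := by
    intro j
    induction j using Nat.twoStepInduction with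
    | zero => rw [hR1, hP1, hP0]; ring
    | one => rw [hR2, hP2, hP1]; ring
    | more n ih1 ih2 =>
      have ih1' : R (n + 1) = -(β + 1) * P (n + 1) + β * (β - 1) ^ 3 * P n := ih1
      have ih2' : R (n + 2) = -(β + 1) * P (n + 2) + β * (β - 1) ^ 3 * P (n + 1) := ih2
      have hrr : R (n + 3) = -β ^ 3 * R (n + 2) - (β * (β - 1)) ^ 3 * R (n + 1) :=
        hRrec (n + 2) (by omega)
      have hp1 : P (n + 2) = -β ^ 3 * P (n + 1) - (β * (β - 1)) ^ 3 * P n :=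
        hPrec (n + 1) (by omega)
      have hp2 : P (n + 3) = -β ^ 3 * P (n + 2) - (β * (β - 1)) ^ 3 * P (n + 1) :=
        hPrec (n + 2) (by omega)
      show R (n + 3) = -(β + 1) * P (n + 3) + β * (β - 1) ^ 3 * P (n + 2)
      linear_combination hrr - β ^ 3 * ih2' - β ^ 3 * (β - 1) ^ 3 * ih1'
        + (β + 1) * hp2 - β * (β - 1) ^ 3 * hp1
    -- congruence machinery (witness style)
  have tocong : ∀ a b : PowerSeries K, (∀ k, k < q → coeff k a = coeff k b) →
      ∃ w, a = b + PowerSeries.X ^ q * w := by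
    intro a b h
    have hdvd : (PowerSeries.X : PowerSeries K) ^ q ∣ a - b :=
      PowerSeries.X_pow_dvd_iff.mpr (fun m hm => by rw [map_sub, h m hm, sub_self])
    obtain ⟨w, hw⟩ := hdvd
    exact ⟨w, by linear_combination hw⟩
  have fromcong : ∀ a b : PowerSeries K, (∃ w, a = b + PowerSeries.X ^ q * w) →
      ∀ k, k < q → coeff k a = coeff k b := by
    rintro a b ⟨w, hw⟩ k hk
    have hz : coeff k (PowerSeries.X ^ q * w) = 0 :=
      PowerSeries.X_pow_dvd_iff.mp ⟨w, rfl⟩ k hk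
    rw [hw, map_add, hz, add_zero]
  have h3s : (3 : PowerSeries K) = 0 := by
    have h := congrArg (C (R := K)) h3
    rwa [map_ofNat, map_zero] at h
  obtain ⟨wX, hXw⟩ := tocong X (PowerSeries.X + PowerSeries.X ^ 2) hX
  obtain ⟨wY, hYw⟩ := tocong Y (PowerSeries.X - C β * PowerSeries.X ^ 3) hY
  -- main claim for f
  have hfC : ∀ j : ℕ, j ≤ L → ∃ w, f j =
      C (P (j+1)) * PowerSeries.X ^ (3*j+2) + C (Q (j+1)) * PowerSeries.X ^ (3*j+3)
        + PowerSeries.X ^ q * w := by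
    intro j
    induction j using Nat.strong_induction_on with
    | _ j ih =>
      intro hjL
      rcases j with _ | _ | _ | m
      · -- j = 0
        show ∃ w, f 0 = C (P 1) * PowerSeries.X ^ 2 + C (Q 1) * PowerSeries.X ^ 3
          + PowerSeries.X ^ q * w
        refine ⟨wX - wY, ?_⟩
        rw [hf0, hP1, hQ1, map_one]
        linear_combination hXw - hYw
      · -- j = 1
        show ∃ w, f 1 = C (P 2) * PowerSeries.X ^ 5 + C (Q 2) * PowerSeries.X ^ 6
          + PowerSeries.X ^ q * w
        have c0e : ∃ w, f 0 = C (P 1) * PowerSeries.X ^ 2 + C (Q 1) * PowerSeries.X ^ 3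
            + PowerSeries.X ^ q * w := ih 0 (by omega) (by omega)
        obtain ⟨w0, c0⟩ := c0e
        rw [hP1, hQ1, map_one, one_mul] at c0
        refine ⟨(1 + (C β^2 - C β - 1) * (f 0 + (PowerSeries.X^2 + C β * PowerSeries.X^3))
            - (C β + 1) * (PowerSeries.X + PowerSeries.X^2)) * w0
          + (-(X + (PowerSeries.X + PowerSeries.X^2)) - (C β + 1) * f 0) * wX, ?_⟩
        rw [hf1, hP2, hQ2]
        simp only [map_add, map_sub, map_mul, map_pow, map_one, map_neg]
        linear_combination
          (1 + ((C β)^2 - C β - 1) * (f 0 + (PowerSeries.X^2 + C β * PowerSeries.X^3))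
            - (C β + 1) * (PowerSeries.X + PowerSeries.X^2)) * c0
          + (-(X + (PowerSeries.X + PowerSeries.X^2)) - (C β + 1) * f 0) * hXw
          + (-PowerSeries.X^3 - PowerSeries.X^4 - C β * PowerSeries.X^4
            - C β * PowerSeries.X^5 - (C β)^2 * PowerSeries.X^5
            + (C β)^3 * PowerSeries.X^5) * h3s
      · -- j = 2
        show ∃ w, f 2 = C (P 3) * PowerSeries.X ^ 8 + C (Q 3) * PowerSeries.X ^ 9
          + PowerSeries.X ^ q * w
        have c0e : ∃ w, f 0 = C (P 1) * PowerSeries.X ^ 2 + C (Q 1) * PowerSeries.X ^ 3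
            + PowerSeries.X ^ q * w := ih 0 (by omega) (by omega)
        obtain ⟨w0, c0⟩ := c0e
        rw [hP1, hQ1, map_one, one_mul] at c0
        have c1e : ∃ w, f 1 = C (P 2) * PowerSeries.X ^ 5 + C (Q 2) * PowerSeries.X ^ 6
            + PowerSeries.X ^ q * w := ih 1 (by omega) (by omega)
        obtain ⟨w1, c1⟩ := c1e
        rw [hP2, hQ2] at c1
        simp only [map_add, map_sub, map_mul, map_pow, map_neg] at c1
        refine ⟨((C β^2 - C β) * f 1
            + C β^3 * (f 0 + (PowerSeries.X^2 + C β * PowerSeries.X^3)) * X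
            + C β^2 * (f 0^2 + f 0 * (PowerSeries.X^2 + C β * PowerSeries.X^3)
              + (PowerSeries.X^2 + C β * PowerSeries.X^3)^2)) * w0
          + ((C β^2 - C β) * (PowerSeries.X^2 + C β * PowerSeries.X^3) + 1) * w1
          + (C β^3 * (PowerSeries.X^2 + C β * PowerSeries.X^3)^2) * wX, ?_⟩
        rw [hf2, hP3, hQ3]
        simp only [map_add, map_sub, map_mul, map_pow, map_one, map_neg]
        linear_combination
          (((C β)^2 - C β) * f 1
            + (C β)^3 * (f 0 + (PowerSeries.X^2 + C β * PowerSeries.X^3)) * X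
            + (C β)^2 * (f 0^2 + f 0 * (PowerSeries.X^2 + C β * PowerSeries.X^3)
              + (PowerSeries.X^2 + C β * PowerSeries.X^3)^2)) * c0
          + (((C β)^2 - C β) * (PowerSeries.X^2 + C β * PowerSeries.X^3) + 1) * c1
          + ((C β)^3 * (PowerSeries.X^2 + C β * PowerSeries.X^3)^2) * hXw
          + ((C β)^4 * PowerSeries.X^6 + (C β)^3 * PowerSeries.X^7
            + (C β)^4 * PowerSeries.X^7 + (C β)^4 * PowerSeries.X^8
            - (C β)^6 * PowerSeries.X^9) * h3s
      · -- j = m + 3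
        show ∃ w, f (m+3) = C (P (m+4)) * PowerSeries.X ^ (3*m+11)
          + C (Q (m+4)) * PowerSeries.X ^ (3*m+12) + PowerSeries.X ^ q * w
        have hm3L : m + 3 ≤ L := by omega
        have c0e : ∃ w, f 0 = C (P 1) * PowerSeries.X ^ 2 + C (Q 1) * PowerSeries.X ^ 3
            + PowerSeries.X ^ q * w := ih 0 (by omega) (by omega)
        obtain ⟨w0, c0⟩ := c0e
        rw [hP1, hQ1, map_one, one_mul] at c0
        have c1e : ∃ w, f 1 = C (P 2) * PowerSeries.X ^ 5 + C (Q 2) * PowerSeries.X ^ 6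
            + PowerSeries.X ^ q * w := ih 1 (by omega) (by omega)
        obtain ⟨w1, c1⟩ := c1e
        rw [hP2, hQ2] at c1
        simp only [map_add, map_sub, map_mul, map_pow, map_neg] at c1
        have cm1e : ∃ w, f (m+1) = C (P (m+2)) * PowerSeries.X ^ (3*m+5)
            + C (Q (m+2)) * PowerSeries.X ^ (3*m+6) + PowerSeries.X ^ q * w :=
          ih (m+1) (by omega) (by omega)
        obtain ⟨wm1, cm1⟩ := cm1e
        have cm2e : ∃ w, f (m+2) = C (P (m+3)) * PowerSeries.X ^ (3*m+8)
            + C (Q (m+3)) * PowerSeries.X ^ (3*m+9) + PowerSeries.X ^ q * w :=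
          ih (m+2) (by omega) (by omega)
        obtain ⟨wm2, cm2⟩ := cm2e
        -- scalar identities
        have e2 : Q (m+2) = β * P (m+2) - β^2*(β-1)^2 * P (m+1) := hQP (m+1)
        have e3 : Q (m+3) = β * P (m+3) - β^2*(β-1)^2 * P (m+2) := hQP (m+2)
        have e4 : Q (m+4) = β * P (m+4) - β^2*(β-1)^2 * P (m+3) := hQP (m+3)
        have r3 : P (m+3) = -β^3 * P (m+2) - (β*(β-1))^3 * P (m+1) := hPrec (m+2) (by omega)
        have r4 : P (m+4) = -β^3 * P (m+3) - (β*(β-1))^3 * P (m+2) := hPrec (m+3) (by omega)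
        have sB : -β^3 * P (m+2) * (Q (m+3) + β * P (m+3))
            - P (m+3) * ((-β^3) * Q (m+2) + (β^4 - β^3 - β^2) * P (m+2))
            = β^2*(β-1)^2 * P (m+1) * P (m+4) := by
          rw [e3, e2, r4, r3]
          linear_combination (-β^6*(P (m+2))^2 + β^6*(P (m+1))*(P (m+2)) + β^7*(P (m+2))^2
            - 4*β^7*(P (m+1))*(P (m+2)) + 6*β^8*(P (m+1))*(P (m+2))
            - 4*β^9*(P (m+1))*(P (m+2)) + β^10*(P (m+1))*(P (m+2))) * h3
        have sC : -β^4 * P (m+2) * Q (m+3) - P (m+3) * ((β^4 - β^3 - β^2) * Q (m+2))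
            = β^2*(β-1)^2 * P (m+1) * Q (m+4) := by
          rw [e4, e3, e2, r4, r3]
          linear_combination (-β^7*(P (m+2))^2 + β^7*(P (m+1))*(P (m+2)) + β^8*(P (m+2))^2
            - 3*β^8*(P (m+1))*(P (m+2)) - β^8*(P (m+1))^2 + 3*β^9*(P (m+1))*(P (m+2))
            + 6*β^9*(P (m+1))^2 - β^10*(P (m+1))*(P (m+2)) - 15*β^10*(P (m+1))^2
            + 20*β^11*(P (m+1))^2 - 15*β^12*(P (m+1))^2 + 6*β^13*(P (m+1))^2
            - β^14*(P (m+1))^2) * h3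
        have sB' := congrArg (C (R := K)) sB
        simp only [map_add, map_sub, map_mul, map_pow, map_one, map_neg] at sB'
        have sC' := congrArg (C (R := K)) sC
        simp only [map_add, map_sub, map_mul, map_pow, map_one, map_neg] at sC'
        have hne : β^2*(β-1)^2*P (m+1) ≠ 0 :=
          mul_ne_zero (mul_ne_zero (pow_ne_zero 2 hβ0) (pow_ne_zero 2 hβ1'))
            (hPne (m+1) (by omega) (by omega))
        have hcK : (β^2*(β-1)^2*P (m+1)) * (β^2*(β-1)^2*P (m+1))⁻¹ = 1 := mul_inv_cancel₀ hne
        have hc : C (β^2*(β-1)^2*P (m+1)) * C ((β^2*(β-1)^2*P (m+1))⁻¹) = 1 := by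
          rw [← map_mul, hcK, map_one]
        simp only [map_mul, map_pow, map_sub, map_one] at hc
        have hdef : f (m+3) = (-C (β^3 * P (m+2)) * (f 0 * f (m+2))
            - C (P (m+3)) * (f 1 * f (m+1))) * C ((β^2*(β-1)^2*P (m+1))⁻¹) := by
          rw [← PowerSeries.C_inv]
          exact hfj (m+3) (by omega) hm3L
        refine ⟨C ((β^2*(β-1)^2*P (m+1))⁻¹) * (
            (-((C β)^3 * C (P (m+2))) * f (m+2)) * w0
          + (-((C β)^3 * C (P (m+2)))
              * (PowerSeries.X^2 + C β * PowerSeries.X^3)) * wm2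
          + (-(C (P (m+3))) * f (m+1)) * w1
          + (-(C (P (m+3))) * (-(C β)^3 * PowerSeries.X^5
              + ((C β)^4 - (C β)^3 - (C β)^2) * PowerSeries.X^6)) * wm1), ?_⟩
        rw [hdef]
        simp only [map_add, map_sub, map_mul, map_pow, map_one, map_neg]
        linear_combination
          (C (P (m+4)) * PowerSeries.X^(3*m+11)
            + C (Q (m+4)) * PowerSeries.X^(3*m+12)) * hc
          + C ((β^2*(β-1)^2*P (m+1))⁻¹) * (
              ((-((C β)^3 * C (P (m+2)))) * f (m+2)) * c0
            + ((-((C β)^3 * C (P (m+2))))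
                * (PowerSeries.X^2 + C β * PowerSeries.X^3)) * cm2
            + ((-(C (P (m+3)))) * f (m+1)) * c1
            + ((-(C (P (m+3)))) * (-(C β)^3 * PowerSeries.X^5
                + ((C β)^4 - (C β)^3 - (C β)^2) * PowerSeries.X^6)) * cm1
            + PowerSeries.X^(3*m+11) * sB' + PowerSeries.X^(3*m+12) * sC')
  -- main claim for g
  have hgC : ∀ ℓ : ℕ, ℓ ≤ L → ∃ w, g ℓ =
      C (R (ℓ+1)) * PowerSeries.X ^ (3*ℓ+3) + C (P (ℓ+1)) * PowerSeries.X ^ (3*ℓ+4)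
        + PowerSeries.X ^ q * w := by
    intro ℓ
    induction ℓ with
    | zero =>
      intro _
      show ∃ w, g 0 = C (R 1) * PowerSeries.X ^ 3 + C (P 1) * PowerSeries.X ^ 4
        + PowerSeries.X ^ q * w
      obtain ⟨w0, c0⟩ := hfC 0 (by omega)
      rw [show (0:ℕ)+1 = 1 from rfl, show 3*0+2 = 2 from rfl, show 3*0+3 = 3 from rfl,
        hP1, hQ1, map_one, one_mul] at c0
      refine ⟨(X + (PowerSeries.X + PowerSeries.X^2)) * wX - w0, ?_⟩
      rw [hg0, hR1, hP1, map_one, one_mul]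
      simp only [map_add, map_sub, map_mul, map_pow, map_one, map_neg]
      linear_combination (X + (PowerSeries.X + PowerSeries.X^2)) * hXw - c0
        + PowerSeries.X^3 * h3s
    | succ m ihm =>
      intro hjL
      show ∃ w, g (m+1) = C (R (m+2)) * PowerSeries.X ^ (3*m+6)
        + C (P (m+2)) * PowerSeries.X ^ (3*m+7) + PowerSeries.X ^ q * w
      obtain ⟨w0, c0⟩ := hfC 0 (by omega)
      rw [show (0:ℕ)+1 = 1 from rfl, show 3*0+2 = 2 from rfl, show 3*0+3 = 3 from rfl,
        hP1, hQ1, map_one, one_mul] at c0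
      have cfe : ∃ w, f (m+1) = C (P (m+2)) * PowerSeries.X ^ (3*m+5)
          + C (Q (m+2)) * PowerSeries.X ^ (3*m+6) + PowerSeries.X ^ q * w :=
        hfC (m+1) (by omega)
      obtain ⟨wf, cf⟩ := cfe
      have cge : ∃ w, g m = C (R (m+1)) * PowerSeries.X ^ (3*m+3)
          + C (P (m+1)) * PowerSeries.X ^ (3*m+4) + PowerSeries.X ^ q * w :=
        ihm (by omega)
      obtain ⟨wg, cg⟩ := cge
      -- scalar identity
      have sI : P (m+2) * (P (m+1) + β * R (m+1)) - R (m+1) * Q (m+2)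
          = β * P (m+1) * R (m+2) := by
        have e2 : Q (m+2) = β * P (m+2) - β^2*(β-1)^2 * P (m+1) := hQP (m+1)
        have f1' : R (m+1) = -(β+1) * P (m+1) + β*(β-1)^3 * P m := hRP m
        have f2' : R (m+2) = -(β+1) * P (m+2) + β*(β-1)^3 * P (m+1) := hRP (m+1)
        have r2 : P (m+2) = -β^3 * P (m+1) - (β*(β-1))^3 * P m := hPrec (m+1) (by omega)
        rw [e2, f2', f1', r2]
        linear_combination (-β^3*(P (m+1))^2 + β^4*(P (m+1))^2 + β^4*(P m)*(P (m+1))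
          - β^5*(P (m+1))^2 - 3*β^5*(P m)*(P (m+1)) + 3*β^6*(P m)*(P (m+1))
          - β^7*(P m)*(P (m+1))) * h3
      have sI' := congrArg (C (R := K)) sI
      simp only [map_add, map_sub, map_mul, map_pow, map_one, map_neg] at sI'
      have hne : P (m+1) * β ≠ 0 := mul_ne_zero (hPne (m+1) (by omega) (by omega)) hβ0
      have hcK : (P (m+1) * β) * (P (m+1) * β)⁻¹ = 1 := mul_inv_cancel₀ hne
      have hc : C (P (m+1) * β) * C ((P (m+1) * β)⁻¹) = 1 := by
        rw [← map_mul, hcK, map_one]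
      simp only [map_mul] at hc
      have hd : g (m+1) = (C (P (m+2)) * (g m * f 0) - C (R (m+1)) * f (m+1))
          * C ((P (m+1) * β)⁻¹) := by
        rw [← PowerSeries.C_inv]
        exact hgl (m+1) (by omega) hjL
      refine ⟨C ((P (m+1) * β)⁻¹) * (
          (C (P (m+2)) * f 0) * wg
        + (C (P (m+2)) * (C (R (m+1)) * PowerSeries.X^(3*m+3)
            + C (P (m+1)) * PowerSeries.X^(3*m+4))) * w0
        + (-(C (R (m+1)))) * wf), ?_⟩
      rw [hd]
      linear_combination
        (C (R (m+2)) * PowerSeries.X^(3*m+6) + C (P (m+2)) * PowerSeries.X^(3*m+7)) * hc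
        + C ((P (m+1) * β)⁻¹) * (
            (C (P (m+2)) * f 0) * cg
          + (C (P (m+2)) * (C (R (m+1)) * PowerSeries.X^(3*m+3)
              + C (P (m+1)) * PowerSeries.X^(3*m+4))) * c0
          + (-(C (R (m+1)))) * cf
          + PowerSeries.X^(3*m+6) * sI')
  intro ℓ hℓ k hk
  refine fromcong _ _ ?_ k hk
  obtain ⟨w, hw⟩ := hgC ℓ hℓ
  exact ⟨w, hw⟩
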